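/- Let n ≥ 1, v = 4n+2, m = 2n+1, and for i ∈ {0,...,2n} set a_i = i and b_i = i + m in Fin v. For a 3-element subset {α0,α1,α2} of {0,...,2n} with α0 < α1 < α2, let 𝒯_{α0α1α2} = (a_{α0} a_{α1} a_{α2} ; b_{α0} b_{α1} b_{α2}) + (a_{α0} a_{α1} a_{α2} ; b_{α1} b_{α2} b_{α0}) - (a_{α0} a_{α1} a_{α2} ; b_{α2} b_{α0} b_{α1}). Then Σ over all 3-element subsets {α0,α1,α2} of {0,...,2n} of (-1)^(α0+α1+α2) · 𝒯_{α0α1α2} is a (2,3,4n+2)-halving. -/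

import Mathlib

/-- A `T(2,3,v)` trade: `f B = 0` unless `|B| = 3`, and every pair is balanced. -/
def isTrade (v : ℕ) (f : Finset (Fin v) → ℤ) : Prop :=
  (∀ B : Finset (Fin v), B.card ≠ 3 → f B = 0) ∧
  ∀ P : Finset (Fin v), P.card = 2 →
    ∑ B ∈ Finset.univ.filter (fun B : Finset (Fin v) => B.card = 3 ∧ P ⊆ B), f B = 0

/-- A trade is simple if every value lies in `{-1, 0, 1}`. -/
def isSimple (v : ℕ) (f : Finset (Fin v) → ℤ) : Prop :=
  ∀ B : Finset (Fin v), f B = -1 ∨ f B = 0 ∨ f B = 1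

/-- The volume of a trade: the sum of its positive entries. -/
def volume (v : ℕ) (f : Finset (Fin v) → ℤ) : ℤ :=
  ∑ B : Finset (Fin v), max (f B) 0

/-- A `(2,3,v)`-halving: a simple trade taking value `±1` on every 3-subset. -/
def isHalving (v : ℕ) (f : Finset (Fin v) → ℤ) : Prop :=
  isTrade v f ∧ isSimple v f ∧
    ∀ B : Finset (Fin v), B.card = 3 → f B = 1 ∨ f B = -1

/-- The minimal trade `(a₀ a₁ a₂ ; b₀ b₁ b₂)`: it sends each of the eight sets
`{c₀,c₁,c₂}` with `cᵢ ∈ {aᵢ, bᵢ}` to `(-1)^(#{i : cᵢ = bᵢ})` and all other sets to 0. -/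
def minimalTrade (v : ℕ) (a b : Fin 3 → Fin v) : Finset (Fin v) → ℤ :=
  fun B => ∑ s : Fin 3 → Bool,
    (-1 : ℤ) ^ (Finset.univ.filter (fun i => s i = true)).card *
      (if B = Finset.image (fun i => if s i then b i else a i) Finset.univ then 1 else 0)

/-- The directed-edge trade `E(i,j) = 1_{{aᵢ,bᵢ,aⱼ}} + 1_{{aᵢ,bᵢ,bⱼ}} - 1_{{aⱼ,bⱼ,aᵢ}} - 1_{{aⱼ,bⱼ,bᵢ}}`. -/
def edgeTrade (v : ℕ) {ι : Type*} (a b : ι → Fin v) (i j : ι) : Finset (Fin v) → ℤ :=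
  fun B => (if B = {a i, b i, a j} then 1 else 0) + (if B = {a i, b i, b j} then 1 else 0)
    - (if B = {a j, b j, a i} then 1 else 0) - (if B = {a j, b j, b i} then 1 else 0)


lemma sum_bool3 (F : (Fin 3 → Bool) → ℤ) :
    ∑ s : Fin 3 → Bool, F s =
      F ![false,false,false] + F ![true,false,false] + F ![false,true,false] +
      F ![false,false,true] + F ![true,true,false] + F ![true,false,true] +
      F ![false,true,true] + F ![true,true,true] := by
  rw [← Equiv.sum_comp (⟨fun p => ![p.1, p.2.1, p.2.2], fun f => (f 0, f 1, f 2),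
     fun p => rfl, fun f => by funext i; fin_cases i <;> rfl⟩ : Bool × Bool × Bool ≃ (Fin 3 → Bool))]
  simp only [Fintype.sum_prod_type, Fintype.sum_bool, Equiv.coe_fn_mk]
  dsimp only [DFunLike.coe, EquivLike.coe]
  ring

lemma image_univ_fin3 {α : Type*} [DecidableEq α] (f : Fin 3 → α) :
    Finset.image f Finset.univ = {f 0, f 1, f 2} := by
  ext x
  simp only [Finset.mem_image, Finset.mem_univ, true_and, Finset.mem_insert, Finset.mem_singleton]
  constructor
  · rintro ⟨i, rfl⟩; fin_cases i <;> simp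
  · rintro (rfl | rfl | rfl)
    exacts [⟨0, rfl⟩, ⟨1, rfl⟩, ⟨2, rfl⟩]

lemma minimalTrade_expand (v : ℕ) (a b : Fin 3 → Fin v) (B : Finset (Fin v)) :
    minimalTrade v a b B =
      (if B = {a 0, a 1, a 2} then 1 else 0)
      - (if B = {b 0, a 1, a 2} then 1 else 0)
      - (if B = {a 0, b 1, a 2} then 1 else 0)
      - (if B = {a 0, a 1, b 2} then 1 else 0)
      + (if B = {b 0, b 1, a 2} then 1 else 0)
      + (if B = {b 0, a 1, b 2} then 1 else 0)
      + (if B = {a 0, b 1, b 2} then 1 else 0)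
      - (if B = {b 0, b 1, b 2} then 1 else 0) := by
  unfold minimalTrade
  rw [sum_bool3]
  simp only [image_univ_fin3]
  have negite : ∀ (c : Prop) (_ : Decidable c), (if c then (-1:ℤ) else 0) = -(if c then 1 else 0) := by
    intro c _; split_ifs <;> ring
  simp only [show ∀ x y z : Bool, ![x,y,z] 0 = x from fun _ _ _ => rfl,
    show ∀ x y z : Bool, ![x,y,z] 1 = y from fun _ _ _ => rfl,
    show ∀ x y z : Bool, ![x,y,z] 2 = z from fun _ _ _ => rfl,
    show (Finset.filter (fun i => ![false,false,false] i = true) Finset.univ).card = 0 from by decide,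
    show (Finset.filter (fun i => ![true,false,false] i = true) Finset.univ).card = 1 from by decide,
    show (Finset.filter (fun i => ![false,true,false] i = true) Finset.univ).card = 1 from by decide,
    show (Finset.filter (fun i => ![false,false,true] i = true) Finset.univ).card = 1 from by decide,
    show (Finset.filter (fun i => ![true,true,false] i = true) Finset.univ).card = 2 from by decide,
    show (Finset.filter (fun i => ![true,false,true] i = true) Finset.univ).card = 2 from by decide,
    show (Finset.filter (fun i => ![false,true,true] i = true) Finset.univ).card = 2 from by decide,
    show (Finset.filter (fun i => ![true,true,true] i = true) Finset.univ).card = 3 from by decide]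
  norm_num
  rw [negite _ _, negite _ _, negite _ _, negite _ _]
  ring
section Basics
variable {v m : ℕ} {a b : Fin m → Fin v}

/-- `x` belongs to the pair of class `i`. -/
def isOf (a b : Fin m → Fin v) (i : Fin m) (x : Fin v) : Prop := x = a i ∨ x = b i

lemma a_eq_a (ha : ∀ i : Fin m, (a i : ℕ) = (i : ℕ)) {i j : Fin m} : a i = a j ↔ i = j := by
  constructor
  · intro h
    have h2 := congrArg Fin.val h
    rw [ha, ha] at h2
    exact Fin.ext h2
  · rintro rfl; rfl

lemma b_eq_b (hb : ∀ i : Fin m, (b i : ℕ) = (i : ℕ) + m) {i j : Fin m} : b i = b j ↔ i = j := by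
  constructor
  · intro h
    have h2 := congrArg Fin.val h
    rw [hb, hb] at h2
    exact Fin.ext (by omega)
  · rintro rfl; rfl

lemma a_ne_b (ha : ∀ i : Fin m, (a i : ℕ) = (i : ℕ))
    (hb : ∀ i : Fin m, (b i : ℕ) = (i : ℕ) + m) (i j : Fin m) : a i ≠ b j := by
  intro h
  have h2 := congrArg Fin.val h
  rw [ha, hb] at h2
  have := i.isLt
  omega

lemma isOf_unique (ha : ∀ i : Fin m, (a i : ℕ) = (i : ℕ))
    (hb : ∀ i : Fin m, (b i : ℕ) = (i : ℕ) + m) {i j : Fin m} {x : Fin v}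
    (hx : isOf a b i x) (hy : isOf a b j x) : i = j := by
  rcases hx with rfl | rfl <;> rcases hy with h | h
  · exact (a_eq_a ha).mp h
  · exact absurd h (a_ne_b ha hb i j)
  · exact absurd h.symm (a_ne_b ha hb j i)
  · exact (b_eq_b hb).mp h

lemma isOf_ne (ha : ∀ i : Fin m, (a i : ℕ) = (i : ℕ))
    (hb : ∀ i : Fin m, (b i : ℕ) = (i : ℕ) + m) {i j : Fin m} {x y : Fin v}
    (hij : i ≠ j) (hx : isOf a b i x) (hy : isOf a b j y) : x ≠ y := by
  rintro rfl
  exact hij (isOf_unique ha hb hx hy)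

lemma rep (hv : v = 2 * m) (ha : ∀ i : Fin m, (a i : ℕ) = (i : ℕ))
    (hb : ∀ i : Fin m, (b i : ℕ) = (i : ℕ) + m) (x : Fin v) : ∃ c : Fin m, isOf a b c x := by
  by_cases hx : (x : ℕ) < m
  · exact ⟨⟨x, hx⟩, Or.inl (Fin.ext (by rw [ha]))⟩
  · have hm : (x : ℕ) - m < m := by have := x.isLt; omega
    refine ⟨⟨(x : ℕ) - m, hm⟩, Or.inr (Fin.ext ?_)⟩
    rw [hb]
    simp only
    omega

lemma card_triple {α : Type*} [DecidableEq α] {x y z : α} (hxy : x ≠ y) (hxz : x ≠ z)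
    (hyz : y ≠ z) : ({x, y, z} : Finset α).card = 3 := by
  rw [Finset.card_insert_of_notMem (by simp [hxy, hxz]),
    Finset.card_insert_of_notMem (by simp [hyz]), Finset.card_singleton]

end Basics
section SetLemmas
variable {v m : ℕ} {a b : Fin m → Fin v}
  (ha : ∀ i : Fin m, (a i : ℕ) = (i : ℕ)) (hb : ∀ i : Fin m, (b i : ℕ) = (i : ℕ) + m)

include ha hb

lemma eq3_iff {i j k : Fin m} (hij : i ≠ j) (hik : i ≠ k) (hjk : j ≠ k)
    {x y z x' y' z' : Fin v} (hx : isOf a b i x) (hx' : isOf a b i x')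
    (hy : isOf a b j y) (hy' : isOf a b j y') (hz : isOf a b k z) (hz' : isOf a b k z') :
    (({x, y, z} : Finset (Fin v)) = {x', y', z'}) ↔ (x = x' ∧ y = y' ∧ z = z') := by
  constructor
  · intro hEq
    have hmx : x ∈ ({x', y', z'} : Finset (Fin v)) := by rw [← hEq]; simp
    have hmy : y ∈ ({x', y', z'} : Finset (Fin v)) := by rw [← hEq]; simp
    have hmz : z ∈ ({x', y', z'} : Finset (Fin v)) := by rw [← hEq]; simp
    simp only [Finset.mem_insert, Finset.mem_singleton] at hmx hmy hmz
    have ex : x = x' := by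
      rcases hmx with h | h | h
      · exact h
      · exact absurd h (isOf_ne ha hb hij hx hy')
      · exact absurd h (isOf_ne ha hb hik hx hz')
    have ey : y = y' := by
      rcases hmy with h | h | h
      · exact absurd h (isOf_ne ha hb (Ne.symm hij) hy hx')
      · exact h
      · exact absurd h (isOf_ne ha hb hjk hy hz')
    have ez : z = z' := by
      rcases hmz with h | h | h
      · exact absurd h (isOf_ne ha hb (Ne.symm hik) hz hx')
      · exact absurd h (isOf_ne ha hb (Ne.symm hjk) hz hy')
      · exact h
    exact ⟨ex, ey, ez⟩
  · rintro ⟨rfl, rfl, rfl⟩; rfl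

lemma pair_eq_iff {c cw j k : Fin m} {w x : Fin v}
    (hw : isOf a b cw w) (hcw : cw ≠ c) (hx : isOf a b k x) (hkj : k ≠ j) :
    (({a j, b j, x} : Finset (Fin v)) = {a c, b c, w}) ↔ (j = c ∧ x = w) := by
  constructor
  · intro hEq
    have hmaj : a j ∈ ({a c, b c, w} : Finset (Fin v)) := by rw [← hEq]; simp
    have hmbj : b j ∈ ({a c, b c, w} : Finset (Fin v)) := by rw [← hEq]; simp
    simp only [Finset.mem_insert, Finset.mem_singleton] at hmaj hmbj
    have hjc : j = c := by
      rcases hmaj with h | h | h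
      · exact (a_eq_a ha).mp h
      · exact absurd h (a_ne_b ha hb j c)
      · -- a j = w; then look at b j
        rcases hmbj with h2 | h2 | h2
        · exact absurd h2.symm (a_ne_b ha hb c j)
        · -- b j = b c : j = c, but then w = a j = a c contradicts hw,hcw
          have hjc := (b_eq_b hb).mp h2
          subst hjc
          exact absurd h.symm (isOf_ne ha hb (fun hh => hcw hh) hw (Or.inl rfl))
        · exact absurd (h.trans h2.symm) (a_ne_b ha hb j j)
      -- done
    subst hjc
    have hmx : x ∈ ({a j, b j, w} : Finset (Fin v)) := by rw [← hEq]; simp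
    simp only [Finset.mem_insert, Finset.mem_singleton] at hmx
    refine ⟨rfl, ?_⟩
    rcases hmx with h | h | h
    · exact absurd h (isOf_ne ha hb hkj hx (Or.inl rfl))
    · exact absurd h (isOf_ne ha hb hkj hx (Or.inr rfl))
    · exact h
  · rintro ⟨rfl, rfl⟩; rfl

lemma triple_ne_pair {i j k : Fin m} (hij : i ≠ j) (hik : i ≠ k) (hjk : j ≠ k)
    {x y z : Fin v} (hx : isOf a b i x) (hy : isOf a b j y) (hz : isOf a b k z)
    (c : Fin m) (w : Fin v) : ({x, y, z} : Finset (Fin v)) ≠ {a c, b c, w} := by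
  intro hEq
  have hac : a c ∈ ({x, y, z} : Finset (Fin v)) := by rw [hEq]; simp
  have hbc : b c ∈ ({x, y, z} : Finset (Fin v)) := by rw [hEq]; simp
  simp only [Finset.mem_insert, Finset.mem_singleton] at hac hbc
  have key : ∀ u : Fin v, u = a c ∨ u = b c → ∀ d : Fin m, isOf a b d u → d = c := by
    rintro u hu d hd
    exact isOf_unique ha hb hd hu
  rcases hac with h1 | h1 | h1 <;> rcases hbc with h2 | h2 | h2
  · exact a_ne_b ha hb c c (h1.trans h2.symm)
  · exact hij ((key x (Or.inl h1.symm) i hx).trans (key y (Or.inr h2.symm) j hy).symm)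
  · exact hik ((key x (Or.inl h1.symm) i hx).trans (key z (Or.inr h2.symm) k hz).symm)
  · exact hij ((key x (Or.inr h2.symm) i hx).trans (key y (Or.inl h1.symm) j hy).symm)
  · exact a_ne_b ha hb c c (h1.trans h2.symm)
  · exact hjk ((key y (Or.inl h1.symm) j hy).trans (key z (Or.inr h2.symm) k hz).symm)
  · exact hik ((key x (Or.inr h2.symm) i hx).trans (key z (Or.inl h1.symm) k hz).symm)
  · exact hjk ((key y (Or.inr h2.symm) j hy).trans (key z (Or.inl h1.symm) k hz).symm)
  · exact a_ne_b ha hb c c (h1.trans h2.symm)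

lemma pairset_ne_pure_a {j : Fin m} {x : Fin v} (p q r : Fin m) :
    ({a j, b j, x} : Finset (Fin v)) ≠ {a p, a q, a r} := by
  intro hEq
  have hbj : b j ∈ ({a p, a q, a r} : Finset (Fin v)) := by rw [← hEq]; simp
  simp only [Finset.mem_insert, Finset.mem_singleton] at hbj
  rcases hbj with h | h | h
  · exact a_ne_b ha hb p j h.symm
  · exact a_ne_b ha hb q j h.symm
  · exact a_ne_b ha hb r j h.symm

lemma pairset_ne_pure_b {j : Fin m} {x : Fin v} (p q r : Fin m) :
    ({a j, b j, x} : Finset (Fin v)) ≠ {b p, b q, b r} := by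
  intro hEq
  have haj : a j ∈ ({b p, b q, b r} : Finset (Fin v)) := by rw [← hEq]; simp
  simp only [Finset.mem_insert, Finset.mem_singleton] at haj
  rcases haj with h | h | h
  · exact a_ne_b ha hb j p h
  · exact a_ne_b ha hb j q h
  · exact a_ne_b ha hb j r h

end SetLemmas
section Vanish
variable {v m : ℕ} {a b : Fin m → Fin v}
  (ha : ∀ i : Fin m, (a i : ℕ) = (i : ℕ)) (hb : ∀ i : Fin m, (b i : ℕ) = (i : ℕ) + m)

lemma minimalTrade_eq_zero_of_free (a' b' : Fin 3 → Fin v) (B : Finset (Fin v)) (w : Fin v)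
    (hw : w ∈ B) (hfa : ∀ t, w ≠ a' t) (hfb : ∀ t, w ≠ b' t) :
    minimalTrade v a' b' B = 0 := by
  unfold minimalTrade
  apply Finset.sum_eq_zero
  intro s _
  rw [if_neg, mul_zero]
  intro hEq
  rw [hEq] at hw
  obtain ⟨t, -, ht⟩ := Finset.mem_image.mp hw
  by_cases h : s t <;> simp only [h, if_true, if_false, ite_true, ite_false] at ht
  · exact hfb t ht.symm
  · exact hfa t ht.symm

include ha hb in
lemma minimalTrade_eq_zero_of_pairclass (g : Fin 3 → Fin m) (hg : Function.Injective g)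
    (c : Fin m) (B : Finset (Fin v)) (haB : a c ∈ B) (hbB : b c ∈ B) :
    minimalTrade v (fun t => a (g t)) (fun t => b (g t)) B = 0 := by
  unfold minimalTrade
  apply Finset.sum_eq_zero
  intro s _
  rw [if_neg, mul_zero]
  intro hEq
  rw [hEq] at haB hbB
  obtain ⟨t, -, ht⟩ := Finset.mem_image.mp haB
  obtain ⟨t', -, ht'⟩ := Finset.mem_image.mp hbB
  by_cases h : s t <;> simp only [h, ite_true, ite_false] at ht
  · exact a_ne_b ha hb c (g t) ht.symm
  · by_cases h' : s t' <;> simp only [h', ite_true, ite_false] at ht'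
    · have : g t' = c := (b_eq_b hb).mp ht'
      have : t' = t := hg (this.trans ((a_eq_a ha).mp ht).symm)
      rw [this] at h'
      exact h h'
    · exact a_ne_b ha hb (g t') c ht'

lemma minimalTrade_eq_zero_of_card (a' b' : Fin 3 → Fin v)
    (hd : ∀ (s : Fin 3 → Bool) (t t' : Fin 3), t ≠ t' →
      (if s t then b' t else a' t) ≠ (if s t' then b' t' else a' t'))
    (B : Finset (Fin v)) (hB : B.card ≠ 3) :
    minimalTrade v a' b' B = 0 := by
  unfold minimalTrade
  apply Finset.sum_eq_zero
  intro s _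
  rw [if_neg, mul_zero]
  intro hEq
  apply hB
  rw [hEq, Finset.card_image_of_injective _ (fun t t' htt => by
    by_contra hne
    exact hd s t t' hne htt), Finset.card_univ, Fintype.card_fin]

lemma minimalTrade_pairsum (a' b' : Fin 3 → Fin v)
    (daa : ∀ t t' : Fin 3, t ≠ t' → a' t ≠ a' t')
    (dbb : ∀ t t' : Fin 3, t ≠ t' → b' t ≠ b' t')
    (dab : ∀ t t' : Fin 3, t ≠ t' → a' t ≠ b' t')
    (P : Finset (Fin v)) (hP : P.card = 2) :
    ∑ B ∈ Finset.univ.filter (fun B : Finset (Fin v) => B.card = 3 ∧ P ⊆ B),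
      minimalTrade v a' b' B = 0 := by
  obtain ⟨x, y, hxy, rfl⟩ := Finset.card_eq_two.mp hP
  rw [Finset.sum_congr rfl (fun B _ => minimalTrade_expand v a' b' B)]
  simp only [Finset.sum_add_distrib, Finset.sum_sub_distrib, Finset.sum_ite_eq']
  have hcard : ∀ S : Finset (Fin v), S.card = 3 →
      ((if S ∈ Finset.univ.filter (fun B : Finset (Fin v) => B.card = 3 ∧ {x, y} ⊆ B)
        then (1:ℤ) else 0) = if ({x, y} : Finset (Fin v)) ⊆ S then 1 else 0) := by
    intro S hS
    simp [Finset.mem_filter, hS]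
  have n01 : (0 : Fin 3) ≠ 1 := by decide
  have n02 : (0 : Fin 3) ≠ 2 := by decide
  have n12 : (1 : Fin 3) ≠ 2 := by decide
  rw [hcard _ (card_triple (daa 0 1 n01) (daa 0 2 n02) (daa 1 2 n12)),
      hcard _ (card_triple (fun h => dab 1 0 n01.symm h.symm) (fun h => dab 2 0 n02.symm h.symm) (daa 1 2 n12)),
      hcard _ (card_triple (dab 0 1 n01) (daa 0 2 n02) (fun h => dab 2 1 n12.symm h.symm)),
      hcard _ (card_triple (daa 0 1 n01) (dab 0 2 n02) (dab 1 2 n12)),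
      hcard _ (card_triple (dbb 0 1 n01) (fun h => dab 2 0 n02.symm h.symm) (fun h => dab 2 1 n12.symm h.symm)),
      hcard _ (card_triple (fun h => dab 1 0 n01.symm h.symm) (dbb 0 2 n02) (dab 1 2 n12)),
      hcard _ (card_triple (dab 0 1 n01) (dab 0 2 n02) (dbb 1 2 n12)),
      hcard _ (card_triple (dbb 0 1 n01) (dbb 0 2 n02) (dbb 1 2 n12))]
  -- now cancellation via a free pair index
  have subs : ∀ u1 u2 u3 : Fin v, (({x, y} : Finset (Fin v)) ⊆ {u1, u2, u3}) ↔
      ((x = u1 ∨ x = u2 ∨ x = u3) ∧ (y = u1 ∨ y = u2 ∨ y = u3)) := by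
    intro u1 u2 u3
    simp [Finset.insert_subset_iff, Finset.mem_insert]
  simp only [subs]
  have not01 : ∀ u : Fin v, (u = a' 0 ∨ u = b' 0) → ¬(u = a' 1 ∨ u = b' 1) := by
    rintro u (rfl | rfl) (h | h)
    · exact daa 0 1 (by decide) h
    · exact dab 0 1 (by decide) h
    · exact dab 1 0 (by decide) h.symm
    · exact dbb 0 1 (by decide) h
  have not02 : ∀ u : Fin v, (u = a' 0 ∨ u = b' 0) → ¬(u = a' 2 ∨ u = b' 2) := by
    rintro u (rfl | rfl) (h | h)
    · exact daa 0 2 (by decide) h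
    · exact dab 0 2 (by decide) h
    · exact dab 2 0 (by decide) h.symm
    · exact dbb 0 2 (by decide) h
  have not12 : ∀ u : Fin v, (u = a' 1 ∨ u = b' 1) → ¬(u = a' 2 ∨ u = b' 2) := by
    rintro u (rfl | rfl) (h | h)
    · exact daa 1 2 (by decide) h
    · exact dab 1 2 (by decide) h
    · exact dab 2 1 (by decide) h.symm
    · exact dbb 1 2 (by decide) h
  by_cases h0 : (x = a' 0 ∨ x = b' 0) ∨ (y = a' 0 ∨ y = b' 0)
  · by_cases h1 : (x = a' 1 ∨ x = b' 1) ∨ (y = a' 1 ∨ y = b' 1)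
    · -- index 2 is free for both x and y
      have fx : ¬(x = a' 2 ∨ x = b' 2) ∧ ¬(y = a' 2 ∨ y = b' 2) := by
        rcases h0 with h0 | h0 <;> rcases h1 with h1 | h1
        · exact absurd h1 (not01 x h0)
        · exact ⟨not02 x h0, not12 y h1⟩
        · exact ⟨not12 x h1, not02 y h0⟩
        · exact absurd h1 (not01 y h0)
      push_neg at fx
      obtain ⟨⟨fx1, fx2⟩, fy1, fy2⟩ := fx
      have e1 : ∀ u1 u2 : Fin v,
          (((x = u1 ∨ x = u2 ∨ x = a' 2) ∧ (y = u1 ∨ y = u2 ∨ y = a' 2)) ↔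
           ((x = u1 ∨ x = u2 ∨ x = b' 2) ∧ (y = u1 ∨ y = u2 ∨ y = b' 2))) := by
        intro u1 u2
        simp [fx1, fx2, fy1, fy2]
      simp only [e1 (a' 0) (a' 1), e1 (b' 0) (a' 1), e1 (a' 0) (b' 1), e1 (b' 0) (b' 1)]
      ring
    · push_neg at h1
      obtain ⟨⟨fx1, fx2⟩, fy1, fy2⟩ := h1
      have e1 : ∀ u1 u2 : Fin v,
          (((x = u1 ∨ x = a' 1 ∨ x = u2) ∧ (y = u1 ∨ y = a' 1 ∨ y = u2)) ↔
           ((x = u1 ∨ x = b' 1 ∨ x = u2) ∧ (y = u1 ∨ y = b' 1 ∨ y = u2))) := by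
        intro u1 u2
        simp [fx1, fx2, fy1, fy2]
      simp only [e1 (a' 0) (a' 2), e1 (b' 0) (a' 2), e1 (a' 0) (b' 2), e1 (b' 0) (b' 2)]
      ring
  · push_neg at h0
    obtain ⟨⟨fx1, fx2⟩, fy1, fy2⟩ := h0
    have e1 : ∀ u1 u2 : Fin v,
        (((x = a' 0 ∨ x = u1 ∨ x = u2) ∧ (y = a' 0 ∨ y = u1 ∨ y = u2)) ↔
         ((x = b' 0 ∨ x = u1 ∨ x = u2) ∧ (y = b' 0 ∨ y = u1 ∨ y = u2))) := by
      intro u1 u2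
      simp [fx1, fx2, fy1, fy2]
    simp only [e1 (a' 1) (a' 2), e1 (b' 1) (a' 2), e1 (a' 1) (b' 2), e1 (b' 1) (b' 2)]
    ring

end Vanish
section Eval
variable {v m : ℕ} {a b : Fin m → Fin v}
  (ha : ∀ i : Fin m, (a i : ℕ) = (i : ℕ)) (hb : ∀ i : Fin m, (b i : ℕ) = (i : ℕ) + m)

/-- choose `a i` or `b i` according to a Bool. -/
def chc (a b : Fin m → Fin v) (i : Fin m) (t : Bool) : Fin v := if t then b i else a i

lemma chc_isOf {i : Fin m} (t : Bool) : isOf a b i (chc a b i t) := by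
  cases t
  · exact Or.inl rfl
  · exact Or.inr rfl

include ha hb in
lemma chc_eq_iff {i : Fin m} {t t' : Bool} : chc a b i t = chc a b i t' ↔ t = t' := by
  constructor
  · intro h
    cases t <;> cases t' <;> first
      | rfl
      | exact absurd h (a_ne_b ha hb i i)
      | exact absurd h.symm (a_ne_b ha hb i i)
  · rintro rfl; rfl

include ha hb in
lemma eq3_chc {i j k : Fin m} (hij : i ≠ j) (hik : i ≠ k) (hjk : j ≠ k)
    (P1 P2 P3 Q1 Q2 Q3 : Bool) :
    (({chc a b i P1, chc a b j P2, chc a b k P3} : Finset (Fin v)) =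
      {chc a b i Q1, chc a b j Q2, chc a b k Q3}) ↔ (P1 = Q1 ∧ P2 = Q2 ∧ P3 = Q3) := by
  rw [eq3_iff ha hb hij hik hjk (chc_isOf P1) (chc_isOf Q1) (chc_isOf P2) (chc_isOf Q2)
    (chc_isOf P3) (chc_isOf Q3)]
  rw [chc_eq_iff ha hb, chc_eq_iff ha hb, chc_eq_iff ha hb]

include ha hb in
lemma evalM1 (f : Fin 3 → Fin m) (h01 : f 0 ≠ f 1) (h02 : f 0 ≠ f 2) (h12 : f 1 ≠ f 2)
    (P1 P2 P3 : Bool) :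
    minimalTrade v (fun t => a (f t)) (fun t => b (f t))
      {chc a b (f 0) P1, chc a b (f 1) P2, chc a b (f 2) P3} =
    (if P1 then -1 else 1) * (if P2 then -1 else 1) * (if P3 then -1 else 1) := by
  rw [minimalTrade_expand]
  rw [show a (f 0) = chc a b (f 0) false from rfl, show a (f 1) = chc a b (f 1) false from rfl,
    show a (f 2) = chc a b (f 2) false from rfl, show b (f 0) = chc a b (f 0) true from rfl,
    show b (f 1) = chc a b (f 1) true from rfl, show b (f 2) = chc a b (f 2) true from rfl]
  simp only [eq3_chc ha hb h01 h02 h12]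
  cases P1 <;> cases P2 <;> cases P3 <;> norm_num

include ha hb in
lemma lemW0 (f : Fin 3 → Fin m) {i j k : Fin m}
    (hij : i ≠ j) (hik : i ≠ k) (hjk : j ≠ k)
    {x y z : Fin v} (hx : isOf a b i x) (hy : isOf a b j y) (hz : isOf a b k z) :
    minimalTrade v (fun t => a (f t)) (fun t => b (f (t + 1))) {x, y, z}
      - minimalTrade v (fun t => a (f t)) (fun t => b (f (t + 2))) {x, y, z} = 0 := by
  rw [minimalTrade_expand, minimalTrade_expand]
  simp only [show ((0:Fin 3) + 1 = 1) from rfl, show ((1:Fin 3) + 1 = 2) from rfl,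
    show ((2:Fin 3) + 1 = 0) from rfl, show ((0:Fin 3) + 2 = 2) from rfl,
    show ((1:Fin 3) + 2 = 0) from rfl, show ((2:Fin 3) + 2 = 1) from rfl]
  have tnp := triple_ne_pair ha hb hij hik hjk hx hy hz
  have c1 : ({b (f 1), a (f 1), a (f 2)} : Finset (Fin v)) = {a (f 1), b (f 1), a (f 2)} := by
    ext u; simp; tauto
  have c2 : ({a (f 0), b (f 2), a (f 2)} : Finset (Fin v)) = {a (f 2), b (f 2), a (f 0)} := by
    ext u; simp; tauto
  have c3 : ({a (f 0), a (f 1), b (f 0)} : Finset (Fin v)) = {a (f 0), b (f 0), a (f 1)} := by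
    ext u; simp; tauto
  have c4 : ({b (f 1), b (f 2), a (f 2)} : Finset (Fin v)) = {a (f 2), b (f 2), b (f 1)} := by
    ext u; simp; tauto
  have c5 : ({b (f 1), a (f 1), b (f 0)} : Finset (Fin v)) = {a (f 1), b (f 1), b (f 0)} := by
    ext u; simp; tauto
  have c6 : ({a (f 0), b (f 2), b (f 0)} : Finset (Fin v)) = {a (f 0), b (f 0), b (f 2)} := by
    ext u; simp; tauto
  have d1 : ({b (f 2), a (f 1), a (f 2)} : Finset (Fin v)) = {a (f 2), b (f 2), a (f 1)} := by
    ext u; simp; tauto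
  have d2 : ({a (f 0), a (f 1), b (f 1)} : Finset (Fin v)) = {a (f 1), b (f 1), a (f 0)} := by
    ext u; simp; tauto
  have d3 : ({b (f 2), b (f 0), a (f 2)} : Finset (Fin v)) = {a (f 2), b (f 2), b (f 0)} := by
    ext u; simp; tauto
  have d4 : ({b (f 2), a (f 1), b (f 1)} : Finset (Fin v)) = {a (f 1), b (f 1), b (f 2)} := by
    ext u; simp; tauto
  have e1 : ({b (f 1), b (f 2), b (f 0)} : Finset (Fin v)) = {b (f 0), b (f 1), b (f 2)} := by
    ext u; simp; tauto
  have e2 : ({b (f 2), b (f 0), b (f 1)} : Finset (Fin v)) = {b (f 0), b (f 1), b (f 2)} := by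
    ext u; simp; tauto
  simp only [c1, c2, c3, c4, c5, c6, d1, d2, d3, d4, e1, e2]
  rw [if_neg (tnp (f 1) (a (f 2))), if_neg (tnp (f 2) (a (f 0))), if_neg (tnp (f 0) (a (f 1))),
    if_neg (tnp (f 2) (b (f 1))), if_neg (tnp (f 1) (b (f 0))), if_neg (tnp (f 0) (b (f 2))),
    if_neg (tnp (f 2) (a (f 1))), if_neg (tnp (f 0) (a (f 2))), if_neg (tnp (f 1) (a (f 0))),
    if_neg (tnp (f 2) (b (f 0))), if_neg (tnp (f 1) (b (f 2))), if_neg (tnp (f 0) (b (f 1)))]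
  ring

include ha hb in
lemma lemW (f : Fin 3 → Fin m) (h01 : f 0 ≠ f 1) (h02 : f 0 ≠ f 2) (h12 : f 1 ≠ f 2)
    {j k : Fin m} (hkj : k ≠ j) {x : Fin v} (hx : isOf a b k x) :
    minimalTrade v (fun t => a (f t)) (fun t => b (f (t + 1))) {a j, b j, x}
      - minimalTrade v (fun t => a (f t)) (fun t => b (f (t + 2))) {a j, b j, x}
    = (if j = f 0 then ((if k = f 2 then 1 else 0) - (if k = f 1 then 1 else 0)) else 0)
      + (if j = f 1 then ((if k = f 0 then 1 else 0) - (if k = f 2 then 1 else 0)) else 0)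
      + (if j = f 2 then ((if k = f 1 then 1 else 0) - (if k = f 0 then 1 else 0)) else 0) := by
  rw [minimalTrade_expand, minimalTrade_expand]
  simp only [show ((0:Fin 3) + 1 = 1) from rfl, show ((1:Fin 3) + 1 = 2) from rfl,
    show ((2:Fin 3) + 1 = 0) from rfl, show ((0:Fin 3) + 2 = 2) from rfl,
    show ((1:Fin 3) + 2 = 0) from rfl, show ((2:Fin 3) + 2 = 1) from rfl]
  have c1 : ({b (f 1), a (f 1), a (f 2)} : Finset (Fin v)) = {a (f 1), b (f 1), a (f 2)} := by
    ext u; simp; tauto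
  have c2 : ({a (f 0), b (f 2), a (f 2)} : Finset (Fin v)) = {a (f 2), b (f 2), a (f 0)} := by
    ext u; simp; tauto
  have c3 : ({a (f 0), a (f 1), b (f 0)} : Finset (Fin v)) = {a (f 0), b (f 0), a (f 1)} := by
    ext u; simp; tauto
  have c4 : ({b (f 1), b (f 2), a (f 2)} : Finset (Fin v)) = {a (f 2), b (f 2), b (f 1)} := by
    ext u; simp; tauto
  have c5 : ({b (f 1), a (f 1), b (f 0)} : Finset (Fin v)) = {a (f 1), b (f 1), b (f 0)} := by
    ext u; simp; tauto
  have c6 : ({a (f 0), b (f 2), b (f 0)} : Finset (Fin v)) = {a (f 0), b (f 0), b (f 2)} := by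
    ext u; simp; tauto
  have d1 : ({b (f 2), a (f 1), a (f 2)} : Finset (Fin v)) = {a (f 2), b (f 2), a (f 1)} := by
    ext u; simp; tauto
  have d2 : ({a (f 0), a (f 1), b (f 1)} : Finset (Fin v)) = {a (f 1), b (f 1), a (f 0)} := by
    ext u; simp; tauto
  have d3 : ({b (f 2), b (f 0), a (f 2)} : Finset (Fin v)) = {a (f 2), b (f 2), b (f 0)} := by
    ext u; simp; tauto
  have d4 : ({b (f 2), a (f 1), b (f 1)} : Finset (Fin v)) = {a (f 1), b (f 1), b (f 2)} := by
    ext u; simp; tauto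
  simp only [c1, c2, c3, c4, c5, c6, d1, d2, d3, d4]
  rw [if_neg (pairset_ne_pure_a ha hb (f 0) (f 1) (f 2)),
    if_neg (pairset_ne_pure_b ha hb (f 1) (f 2) (f 0)),
    if_neg (pairset_ne_pure_b ha hb (f 2) (f 0) (f 1))]
  simp only [pair_eq_iff ha hb (Or.inl rfl) h12.symm hx hkj,
      pair_eq_iff ha hb (Or.inl rfl) h02 hx hkj,
      pair_eq_iff ha hb (Or.inl rfl) h01.symm hx hkj,
      pair_eq_iff ha hb (Or.inr rfl) h12 hx hkj,
      pair_eq_iff ha hb (Or.inr rfl) h01 hx hkj,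
      pair_eq_iff ha hb (Or.inr rfl) h02.symm hx hkj,
      pair_eq_iff ha hb (Or.inl rfl) h12 hx hkj,
      pair_eq_iff ha hb (Or.inl rfl) h02.symm hx hkj,
      pair_eq_iff ha hb (Or.inl rfl) h01 hx hkj,
      pair_eq_iff ha hb (Or.inr rfl) h02 hx hkj,
      pair_eq_iff ha hb (Or.inr rfl) h12.symm hx hkj,
      pair_eq_iff ha hb (Or.inr rfl) h01.symm hx hkj]
  have iteand : ∀ (P Q : Prop) (_ : Decidable P) (_ : Decidable Q),
      (if P ∧ Q then (1:ℤ) else 0) = (if P then 1 else 0) * (if Q then 1 else 0) := by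
    intro P Q _ _
    by_cases hP : P <;> by_cases hQ : Q <;> simp [hP, hQ]
  have aeb : ∀ i' j' : Fin m, (a i' = b j') ↔ False := fun i' j' => iff_false_intro (a_ne_b ha hb i' j')
  have bea : ∀ i' j' : Fin m, (b i' = a j') ↔ False :=
    fun i' j' => iff_false_intro (fun hh => a_ne_b ha hb j' i' hh.symm)
  have itesub : ∀ (P : Prop) (_ : Decidable P) (X Y : ℤ),
      (if P then (X - Y) else 0) = (if P then 1 else 0) * X - (if P then 1 else 0) * Y := by
    intro P _ X Y
    by_cases hP : P <;> simp [hP]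
  have itena : ∀ (P : Prop) (_ : Decidable P) (X Y : ℤ),
      (if P then (-X + Y) else 0) = -((if P then 1 else 0) * X) + (if P then 1 else 0) * Y := by
    intro P _ X Y
    by_cases hP : P <;> simp [hP]
  rcases hx with rfl | rfl
  · simp only [a_eq_a ha, aeb, and_false, if_false, iteand, itesub, itena]
    ring
  · simp only [b_eq_b hb, bea, aeb, and_false, if_false, iteand, itesub, itena]
    ring

end Eval
section SortSec
variable {m : ℕ}

lemma orderIso_triple {p q r : Fin m} (hpq : p < q) (hqr : q < r)
    (s : Finset (Fin m)) (hs : s = {p, q, r}) (h3 : s.card = 3) (t : Fin 3) :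
    ((s.orderIsoOfFin h3 t : Fin m)) = ![p, q, r] t := by
  subst hs
  rw [Finset.coe_orderIsoOfFin_apply]
  have hmono : StrictMono ![p, q, r] := by
    intro t1 t2 h
    fin_cases t1 <;> fin_cases t2 <;>
      first
        | exact absurd h (by decide)
        | exact hpq
        | exact hqr
        | exact lt_trans hpq hqr
  have hmem : ∀ t : Fin 3, ![p, q, r] t ∈ ({p, q, r} : Finset (Fin m)) := by
    intro t; fin_cases t <;> simp
  rw [← Finset.orderEmbOfFin_unique h3 hmem hmono]

end SortSec

section Classify
variable {v m : ℕ} {a b : Fin m → Fin v}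

lemma classify (hv : v = 2 * m) (ha : ∀ i : Fin m, (a i : ℕ) = (i : ℕ))
    (hb : ∀ i : Fin m, (b i : ℕ) = (i : ℕ) + m) (B : Finset (Fin v)) (hB : B.card = 3) :
    (∃ (i j k : Fin m) (x y z : Fin v), i < j ∧ j < k ∧ isOf a b i x ∧ isOf a b j y ∧
        isOf a b k z ∧ B = {x, y, z}) ∨
    (∃ (j k : Fin m) (x : Fin v), j ≠ k ∧ isOf a b k x ∧ B = {a j, b j, x}) := by
  obtain ⟨x, y, z, hxy, hxz, hyz, rfl⟩ := Finset.card_eq_three.mp hB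
  obtain ⟨cx, hcx⟩ := rep hv ha hb x
  obtain ⟨cy, hcy⟩ := rep hv ha hb y
  obtain ⟨cz, hcz⟩ := rep hv ha hb z
  have pairset : ∀ (c : Fin m) (u w : Fin v), u ≠ w → isOf a b c u → isOf a b c w →
      ∀ t : Fin v, ({u, w, t} : Finset (Fin v)) = {a c, b c, t} := by
    rintro c u w huw (rfl | rfl) (rfl | rfl) t
    · exact absurd rfl huw
    · rfl
    · ext e; simp; tauto
    · exact absurd rfl huw
  by_cases e1 : cx = cy
  · subst e1
    have hcz' : cz ≠ cx := by
      rintro rfl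
      rcases hcx with rfl | rfl <;> rcases hcy with h | h <;> rcases hcz with h2 | h2 <;>
        simp_all
    right
    exact ⟨cx, cz, z, hcz'.symm, hcz, pairset cx x y hxy hcx hcy z⟩
  · by_cases e2 : cx = cz
    · subst e2
      right
      refine ⟨cx, cy, y, e1, hcy, ?_⟩
      have : ({x, y, z} : Finset (Fin v)) = {x, z, y} := by ext e; simp; tauto
      rw [this, pairset cx x z hxz hcx hcz y]
    · by_cases e3 : cy = cz
      · subst e3
        right
        refine ⟨cy, cx, x, fun h => e1 h.symm, hcx, ?_⟩
        have : ({x, y, z} : Finset (Fin v)) = {y, z, x} := by ext e; simp; tauto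
        rw [this, pairset cy y z hyz hcy hcz x]
      · left
        rcases lt_trichotomy cx cy with h1 | h1 | h1
        · rcases lt_trichotomy cy cz with h2 | h2 | h2
          · exact ⟨cx, cy, cz, x, y, z, h1, h2, hcx, hcy, hcz, rfl⟩
          · exact absurd h2 e3
          · rcases lt_trichotomy cx cz with h3 | h3 | h3
            · exact ⟨cx, cz, cy, x, z, y, h3, h2, hcx, hcz, hcy, by ext e; simp; tauto⟩
            · exact absurd h3 e2
            · exact ⟨cz, cx, cy, z, x, y, h3, h1, hcz, hcx, hcy, by ext e; simp; tauto⟩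
        · exact absurd h1 e1
        · rcases lt_trichotomy cx cz with h2 | h2 | h2
          · exact ⟨cy, cx, cz, y, x, z, h1, h2, hcy, hcx, hcz, by ext e; simp; tauto⟩
          · exact absurd h2 e2
          · rcases lt_trichotomy cy cz with h3 | h3 | h3
            · exact ⟨cy, cz, cx, y, z, x, h3, h2, hcy, hcz, hcx, by ext e; simp; tauto⟩
            · exact absurd h3 e3
            · exact ⟨cz, cy, cx, z, y, x, h3, h1, hcz, hcy, hcx, by ext e; simp; tauto⟩

end Classify
section SumEps

lemma neg_one_pow_pm (N : ℕ) : ((-1:ℤ))^N = 1 ∨ ((-1:ℤ))^N = -1 :=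
  (Nat.even_or_odd N).imp (fun h => h.neg_one_pow) (fun h => h.neg_one_pow)

lemma sum_pat (mm p q : ℕ) (hpq : p < q) (hq : q < mm) (hodd : Odd mm) :
    ∑ l ∈ Finset.range mm, ((-1:ℤ))^l * (if l < p then -1 else if l < q then 1 else -1)
      = -2 * (if Even p then 0 else 1) + 2 * (if Even q then 0 else 1) - 1 := by
  have h0p : 0 ≤ p := Nat.zero_le p
  have hpm : p ≤ mm := le_of_lt (lt_trans hpq hq)
  have hpq' : p ≤ q := le_of_lt hpq
  have hqm : q ≤ mm := le_of_lt hq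
  rw [Finset.range_eq_Ico, ← Finset.sum_Ico_consecutive _ h0p hpm,
    ← Finset.sum_Ico_consecutive _ hpq' hqm]
  have A : ∑ l ∈ Finset.Ico 0 p, ((-1:ℤ))^l * (if l < p then -1 else if l < q then 1 else -1)
      = -∑ l ∈ Finset.range p, ((-1:ℤ))^l := by
    rw [← Finset.range_eq_Ico, ← Finset.sum_neg_distrib]
    refine Finset.sum_congr rfl (fun l hl => ?_)
    rw [if_pos (Finset.mem_range.mp hl)]
    ring
  have B : ∑ l ∈ Finset.Ico p q, ((-1:ℤ))^l * (if l < p then -1 else if l < q then 1 else -1)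
      = (∑ l ∈ Finset.range q, ((-1:ℤ))^l) - ∑ l ∈ Finset.range p, ((-1:ℤ))^l := by
    rw [← Finset.sum_Ico_eq_sub _ hpq']
    refine Finset.sum_congr rfl (fun l hl => ?_)
    obtain ⟨h1, h2⟩ := Finset.mem_Ico.mp hl
    rw [if_neg (by omega), if_pos h2]
    ring
  have C : ∑ l ∈ Finset.Ico q mm, ((-1:ℤ))^l * (if l < p then -1 else if l < q then 1 else -1)
      = -((∑ l ∈ Finset.range mm, ((-1:ℤ))^l) - ∑ l ∈ Finset.range q, ((-1:ℤ))^l) := by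
    rw [← Finset.sum_Ico_eq_sub _ hqm, ← Finset.sum_neg_distrib]
    refine Finset.sum_congr rfl (fun l hl => ?_)
    obtain ⟨h1, h2⟩ := Finset.mem_Ico.mp hl
    rw [if_neg (by omega), if_neg (by omega)]
    ring
  have hmm : ¬ Even mm := Nat.not_even_iff_odd.mpr hodd
  rw [A, B, C, neg_one_geom_sum, neg_one_geom_sum, neg_one_geom_sum, if_neg hmm]
  split_ifs <;> ring

lemma sum_eps (mm jn kn : ℕ) (G : ℕ → ℤ) (hodd : Odd mm) (hj : jn < mm) (hk : kn < mm)
    (hjk : jn ≠ kn)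
    (hG : ∀ l, G l = ((-1:ℤ))^(jn+kn+l) *
      (if jn < kn then (if l < jn then -1 else if l < kn then 1 else -1)
       else (if l < kn then 1 else if l < jn then -1 else 1))) :
    (∑ l ∈ Finset.range mm, G l) - G jn - G kn
      = (if jn < kn then -1 else 1) * ((-1:ℤ))^(jn+kn) := by
  rcases hjk.lt_or_gt with hlt | hlt
  · have hS : ∑ l ∈ Finset.range mm, G l
        = ((-1:ℤ))^(jn+kn) * ∑ l ∈ Finset.range mm,
            ((-1:ℤ))^l * (if l < jn then -1 else if l < kn then 1 else -1) := by
      rw [Finset.mul_sum]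
      refine Finset.sum_congr rfl (fun l hl => ?_)
      rw [hG l, if_pos hlt, pow_add]
      ring
    have hnlt : ¬ kn < jn := by omega
    rw [hS, sum_pat mm jn kn hlt hk hodd, hG jn, hG kn]
    rcases Nat.even_or_odd jn with hp | hp <;> rcases Nat.even_or_odd kn with hq | hq
    · simp [pow_add, hp, hq, hp.neg_one_pow, hq.neg_one_pow, hlt, lt_irrefl,
        hnlt]
      try ring
    · simp [pow_add, hp, Nat.not_even_iff_odd.mpr hq, hp.neg_one_pow, hq.neg_one_pow, hlt,
        lt_irrefl, hnlt]
      try ring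
    · simp [pow_add, Nat.not_even_iff_odd.mpr hp, hq, hp.neg_one_pow, hq.neg_one_pow, hlt,
        lt_irrefl, hnlt]
      try ring
    · simp [pow_add, Nat.not_even_iff_odd.mpr hp, Nat.not_even_iff_odd.mpr hq,
        hp.neg_one_pow, hq.neg_one_pow, hlt, lt_irrefl, hnlt]
      try ring
  · have hS : ∑ l ∈ Finset.range mm, G l
        = -(((-1:ℤ))^(jn+kn) * ∑ l ∈ Finset.range mm,
            ((-1:ℤ))^l * (if l < kn then -1 else if l < jn then 1 else -1)) := by
      rw [Finset.mul_sum, ← Finset.sum_neg_distrib]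
      refine Finset.sum_congr rfl (fun l hl => ?_)
      rw [hG l, if_neg (by omega : ¬ jn < kn), pow_add]
      by_cases h1 : l < kn
      · rw [if_pos h1, if_pos h1]; ring
      · rw [if_neg h1, if_neg h1]
        by_cases h2 : l < jn
        · rw [if_pos h2, if_pos h2]; ring
        · rw [if_neg h2, if_neg h2]; ring
    have hnlt : ¬ jn < kn := by omega
    rw [hS, sum_pat mm kn jn hlt hj hodd, hG jn, hG kn]
    rcases Nat.even_or_odd jn with hp | hp <;> rcases Nat.even_or_odd kn with hq | hq
    · simp [pow_add, hp, hq, hp.neg_one_pow, hq.neg_one_pow, hlt, lt_irrefl,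
        hnlt]
      try ring
    · simp [pow_add, hp, Nat.not_even_iff_odd.mpr hq, hp.neg_one_pow, hq.neg_one_pow, hlt,
        lt_irrefl, hnlt]
      try ring
    · simp [pow_add, Nat.not_even_iff_odd.mpr hp, hq, hp.neg_one_pow, hq.neg_one_pow, hlt,
        lt_irrefl, hnlt]
      try ring
    · simp [pow_add, Nat.not_even_iff_odd.mpr hp, Nat.not_even_iff_odd.mpr hq,
        hp.neg_one_pow, hq.neg_one_pow, hlt, lt_irrefl, hnlt]
      try ring
end SumEps
def hFun (v m : ℕ) (a b : Fin m → Fin v) : Finset (Fin v) → ℤ := fun B =>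
  ∑ s ∈ ((Finset.univ : Finset (Fin m)).powersetCard 3).attach,
    (-1 : ℤ) ^ (∑ x ∈ s.1, (x : ℕ)) *
      (minimalTrade v
          (fun k => a ((s.1.orderIsoOfFin (Finset.mem_powersetCard.mp s.2).2) k))
          (fun k => b ((s.1.orderIsoOfFin (Finset.mem_powersetCard.mp s.2).2) k)) B +
        minimalTrade v
          (fun k => a ((s.1.orderIsoOfFin (Finset.mem_powersetCard.mp s.2).2) k))
          (fun k => b ((s.1.orderIsoOfFin (Finset.mem_powersetCard.mp s.2).2) (k + 1))) B -
        minimalTrade v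
          (fun k => a ((s.1.orderIsoOfFin (Finset.mem_powersetCard.mp s.2).2) k))
          (fun k => b ((s.1.orderIsoOfFin (Finset.mem_powersetCard.mp s.2).2) (k + 2))) B)

section Terms
variable {v m : ℕ} {a b : Fin m → Fin v}
  (ha : ∀ i : Fin m, (a i : ℕ) = (i : ℕ)) (hb : ∀ i : Fin m, (b i : ℕ) = (i : ℕ) + m)

include ha hb in
lemma term_zero {B : Finset (Fin v)} {c : Fin m} {w : Fin v}
    (hw : w ∈ B) (hwc : isOf a b c w)
    (s : Finset (Fin m)) (h3 : s.card = 3) (hc : c ∉ s) :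
    (-1 : ℤ) ^ (∑ u ∈ s, (u : ℕ)) *
      (minimalTrade v (fun t => a ((s.orderIsoOfFin h3) t)) (fun t => b ((s.orderIsoOfFin h3) t)) B +
        minimalTrade v (fun t => a ((s.orderIsoOfFin h3) t)) (fun t => b ((s.orderIsoOfFin h3) (t + 1))) B -
        minimalTrade v (fun t => a ((s.orderIsoOfFin h3) t)) (fun t => b ((s.orderIsoOfFin h3) (t + 2))) B)
      = 0 := by
  have hfa : ∀ t : Fin 3, w ≠ a ((s.orderIsoOfFin h3) t) := by
    intro t hEq
    exact hc ((isOf_unique ha hb hwc (Or.inl hEq)) ▸ ((s.orderIsoOfFin h3) t).2)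
  have hfb : ∀ t : Fin 3, w ≠ b ((s.orderIsoOfFin h3) t) := by
    intro t hEq
    exact hc ((isOf_unique ha hb hwc (Or.inr hEq)) ▸ ((s.orderIsoOfFin h3) t).2)
  rw [minimalTrade_eq_zero_of_free _ _ B w hw hfa hfb,
    minimalTrade_eq_zero_of_free _ _ B w hw hfa (fun t => hfb (t + 1)),
    minimalTrade_eq_zero_of_free _ _ B w hw hfa (fun t => hfb (t + 2))]
  ring

include ha hb in
lemma termA {i j k : Fin m} (hij : i < j) (hjk : j < k) (P1 P2 P3 : Bool)
    (s : Finset (Fin m)) (hs : s = {i, j, k}) (h3 : s.card = 3) :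
    (-1 : ℤ) ^ (∑ u ∈ s, (u : ℕ)) *
      (minimalTrade v (fun t => a ((s.orderIsoOfFin h3) t)) (fun t => b ((s.orderIsoOfFin h3) t))
          {chc a b i P1, chc a b j P2, chc a b k P3} +
        minimalTrade v (fun t => a ((s.orderIsoOfFin h3) t)) (fun t => b ((s.orderIsoOfFin h3) (t + 1)))
          {chc a b i P1, chc a b j P2, chc a b k P3} -
        minimalTrade v (fun t => a ((s.orderIsoOfFin h3) t)) (fun t => b ((s.orderIsoOfFin h3) (t + 2)))
          {chc a b i P1, chc a b j P2, chc a b k P3})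
      = (-1 : ℤ) ^ ((i : ℕ) + (j : ℕ) + (k : ℕ)) *
          ((if P1 then -1 else 1) * (if P2 then -1 else 1) * (if P3 then -1 else 1)) := by
  subst hs
  have hij' : i ≠ j := ne_of_lt hij
  have hik' : i ≠ k := ne_of_lt (lt_trans hij hjk)
  have hjk' : j ≠ k := ne_of_lt hjk
  have hσ : ∀ t : Fin 3, ((({i, j, k} : Finset (Fin m)).orderIsoOfFin h3) t : Fin m) = ![i, j, k] t :=
    orderIso_triple hij hjk _ rfl h3
  simp only [hσ]
  have h01 : ![i, j, k] 0 ≠ ![i, j, k] 1 := hij'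
  have h02 : ![i, j, k] 0 ≠ ![i, j, k] 2 := hik'
  have h12 : ![i, j, k] 1 ≠ ![i, j, k] 2 := hjk'
  have hx : isOf a b (![i, j, k] 0) (chc a b i P1) := chc_isOf P1
  have hy : isOf a b (![i, j, k] 1) (chc a b j P2) := chc_isOf P2
  have hz : isOf a b (![i, j, k] 2) (chc a b k P3) := chc_isOf P3
  have h23 := lemW0 ha hb ![i, j, k] h01 h02 h12 hx hy hz
  rw [sub_eq_zero] at h23
  have hM1 := evalM1 ha hb ![i, j, k] h01 h02 h12 P1 P2 P3
  have hsum : (∑ u ∈ ({i, j, k} : Finset (Fin m)), (u : ℕ)) = (i : ℕ) + (j : ℕ) + (k : ℕ) := by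
    rw [Finset.sum_insert (by simp [hij', hik']), Finset.sum_insert (by simp [hjk']),
      Finset.sum_singleton]
    ring
  rw [hsum]
  rw [show ({chc a b (![i,j,k] 0) P1, chc a b (![i,j,k] 1) P2, chc a b (![i,j,k] 2) P3} :
      Finset (Fin v)) = {chc a b i P1, chc a b j P2, chc a b k P3} from rfl] at hM1
  rw [hM1, h23]
  ring

include ha hb in
lemma termB {j k : Fin m} (hjk : j ≠ k) {x : Fin v} (hx : isOf a b k x)
    {p q r : Fin m} (hpq : p < q) (hqr : q < r)
    (s : Finset (Fin m)) (hs : s = {p, q, r}) (h3 : s.card = 3) :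
    (-1 : ℤ) ^ (∑ u ∈ s, (u : ℕ)) *
      (minimalTrade v (fun t => a ((s.orderIsoOfFin h3) t)) (fun t => b ((s.orderIsoOfFin h3) t))
          {a j, b j, x} +
        minimalTrade v (fun t => a ((s.orderIsoOfFin h3) t)) (fun t => b ((s.orderIsoOfFin h3) (t + 1)))
          {a j, b j, x} -
        minimalTrade v (fun t => a ((s.orderIsoOfFin h3) t)) (fun t => b ((s.orderIsoOfFin h3) (t + 2)))
          {a j, b j, x})
      = (-1 : ℤ) ^ (∑ u ∈ s, (u : ℕ)) *
          ((if j = p then ((if k = r then 1 else 0) - (if k = q then 1 else 0)) else 0)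
            + (if j = q then ((if k = p then 1 else 0) - (if k = r then 1 else 0)) else 0)
            + (if j = r then ((if k = q then 1 else 0) - (if k = p then 1 else 0)) else 0)) := by
  subst hs
  have hσ : ∀ t : Fin 3, ((({p, q, r} : Finset (Fin m)).orderIsoOfFin h3) t : Fin m) = ![p, q, r] t :=
    orderIso_triple hpq hqr _ rfl h3
  simp only [hσ]
  have hinj : Function.Injective ![p, q, r] := by
    intro t1 t2 hEq
    have hpq' : p ≠ q := ne_of_lt hpq
    have hpr' : p ≠ r := ne_of_lt (lt_trans hpq hqr)
    have hqr' : q ≠ r := ne_of_lt hqr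
    fin_cases t1 <;> fin_cases t2 <;> simp_all <;> rfl
  rw [minimalTrade_eq_zero_of_pairclass ha hb ![p, q, r] hinj j _ (by simp) (by simp)]
  have h01 : ![p, q, r] 0 ≠ ![p, q, r] 1 := ne_of_lt hpq
  have h02 : ![p, q, r] 0 ≠ ![p, q, r] 2 := ne_of_lt (lt_trans hpq hqr)
  have h12 : ![p, q, r] 1 ≠ ![p, q, r] 2 := ne_of_lt hqr
  have hW := lemW ha hb ![p, q, r] h01 h02 h12 hjk.symm hx
  rw [zero_add, sub_eq_iff_eq_add] at *
  rw [show minimalTrade v (fun t => a (![p,q,r] t)) (fun t => b (![p,q,r] (t+1))) {a j, b j, x}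
      = _ from hW]
  rw [show (![p,q,r] 0 : Fin m) = p from rfl, show (![p,q,r] 1 : Fin m) = q from rfl,
    show (![p,q,r] 2 : Fin m) = r from rfl]
  ring

end Terms
section Mains
variable {v m : ℕ} {a b : Fin m → Fin v}
  (ha : ∀ i : Fin m, (a i : ℕ) = (i : ℕ)) (hb : ∀ i : Fin m, (b i : ℕ) = (i : ℕ) + m)

include ha hb in
lemma mainA {i j k : Fin m} (hij : i < j) (hjk : j < k)
    {x y z : Fin v} (hx : isOf a b i x) (hy : isOf a b j y) (hz : isOf a b k z) :
    hFun v m a b {x, y, z} = 1 ∨ hFun v m a b {x, y, z} = -1 := by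
  have hij' : i ≠ j := ne_of_lt hij
  have hik' : i ≠ k := ne_of_lt (lt_trans hij hjk)
  have hjk' : j ≠ k := ne_of_lt hjk
  obtain ⟨P1, rfl⟩ : ∃ t, x = chc a b i t := by
    rcases hx with rfl | rfl; exacts [⟨false, rfl⟩, ⟨true, rfl⟩]
  obtain ⟨P2, rfl⟩ : ∃ t, y = chc a b j t := by
    rcases hy with rfl | rfl; exacts [⟨false, rfl⟩, ⟨true, rfl⟩]
  obtain ⟨P3, rfl⟩ : ∃ t, z = chc a b k t := by
    rcases hz with rfl | rfl; exacts [⟨false, rfl⟩, ⟨true, rfl⟩]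
  have hcard : ({i, j, k} : Finset (Fin m)).card = 3 := card_triple hij' hik' hjk'
  have hmem : ({i, j, k} : Finset (Fin m)) ∈ (Finset.univ : Finset (Fin m)).powersetCard 3 :=
    Finset.mem_powersetCard_univ.mpr hcard
  unfold hFun
  rw [Finset.sum_eq_single_of_mem (⟨{i, j, k}, hmem⟩ :
      {s // s ∈ (Finset.univ : Finset (Fin m)).powersetCard 3}) (Finset.mem_attach _ _) ?_]
  · rw [termA ha hb hij hjk P1 P2 P3 _ rfl _]
    rcases neg_one_pow_pm ((i : ℕ) + (j : ℕ) + (k : ℕ)) with hpm | hpm <;> rw [hpm] <;>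
      cases P1 <;> cases P2 <;> cases P3 <;> norm_num
  · intro s _ hne
    have hsub : ¬ ({i, j, k} : Finset (Fin m)) ⊆ s.1 := by
      intro hsub
      have hcard' : s.1.card = 3 := (Finset.mem_powersetCard.mp s.2).2
      have : ({i, j, k} : Finset (Fin m)) = s.1 :=
        Finset.eq_of_subset_of_card_le hsub (by rw [hcard', hcard])
      exact hne (Subtype.ext this.symm)
    obtain ⟨c, hc1, hc2⟩ := Finset.not_subset.mp hsub
    simp only [Finset.mem_insert, Finset.mem_singleton] at hc1
    rcases hc1 with rfl | rfl | rfl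
    · exact term_zero ha hb (by simp) (chc_isOf P1) s.1 _ hc2
    · exact term_zero ha hb (by simp) (chc_isOf P2) s.1 _ hc2
    · exact term_zero ha hb (by simp) (chc_isOf P3) s.1 _ hc2

end Mains
/-- The coefficient function for the pair-block sums. -/
def epsF (jn kn : ℕ) : ℕ → ℤ := fun ln => ((-1:ℤ))^(jn+kn+ln) *
  (if jn < kn then (if ln < jn then -1 else if ln < kn then 1 else -1)
   else (if ln < kn then 1 else if ln < jn then -1 else 1))

section MainB
variable {v m : ℕ} {a b : Fin m → Fin v}
  (ha : ∀ i : Fin m, (a i : ℕ) = (i : ℕ)) (hb : ∀ i : Fin m, (b i : ℕ) = (i : ℕ) + m)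

include ha hb in
lemma mainB (hodd : Odd m) {j k : Fin m} (hjk : j ≠ k) {x : Fin v} (hx : isOf a b k x) :
    hFun v m a b {a j, b j, x} = 1 ∨ hFun v m a b {a j, b j, x} = -1 := by
  classical
  unfold hFun
  rw [← Finset.sum_filter_of_ne
      (p := fun s : {s // s ∈ (Finset.univ : Finset (Fin m)).powersetCard 3} =>
        j ∈ s.1 ∧ k ∈ s.1) ?keep]
  case keep =>
    intro s _ hne
    by_contra hcon
    apply hne
    by_cases hj : j ∈ s.1
    · have hk : k ∉ s.1 := fun hk => hcon ⟨hj, hk⟩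
      exact term_zero ha hb (by simp : x ∈ ({a j, b j, x} : Finset (Fin v))) hx s.1 _ hk
    · exact term_zero ha hb (by simp : a j ∈ ({a j, b j, x} : Finset (Fin v)))
        (Or.inl rfl) s.1 _ hj
  have key : ∑ l ∈ Finset.univ \ ({j, k} : Finset (Fin m)), epsF (j:ℕ) (k:ℕ) (l : ℕ) =
      ∑ s ∈ (((Finset.univ : Finset (Fin m)).powersetCard 3).attach).filter
        (fun s => j ∈ s.1 ∧ k ∈ s.1),
        (-1 : ℤ) ^ (∑ u ∈ s.1, (u : ℕ)) *
          (minimalTrade v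
              (fun t => a ((s.1.orderIsoOfFin (Finset.mem_powersetCard.mp s.2).2) t))
              (fun t => b ((s.1.orderIsoOfFin (Finset.mem_powersetCard.mp s.2).2) t)) {a j, b j, x} +
            minimalTrade v
              (fun t => a ((s.1.orderIsoOfFin (Finset.mem_powersetCard.mp s.2).2) t))
              (fun t => b ((s.1.orderIsoOfFin (Finset.mem_powersetCard.mp s.2).2) (t + 1))) {a j, b j, x} -
            minimalTrade v
              (fun t => a ((s.1.orderIsoOfFin (Finset.mem_powersetCard.mp s.2).2) t))
              (fun t => b ((s.1.orderIsoOfFin (Finset.mem_powersetCard.mp s.2).2) (t + 2))) {a j, b j, x}) := by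
    refine Finset.sum_bij (fun l hl => ⟨insert j (insert k {l}), ?_⟩) ?_ ?_ ?_ ?_
    · -- membership in powersetCard
      obtain ⟨-, hl2⟩ := Finset.mem_sdiff.mp hl
      simp only [Finset.mem_insert, Finset.mem_singleton, not_or] at hl2
      exact Finset.mem_powersetCard_univ.mpr
        (card_triple hjk (Ne.symm hl2.1) (Ne.symm hl2.2))
    · -- lands in filter
      intro l hl
      simp only [Finset.mem_filter, Finset.mem_attach, true_and]
      exact ⟨by simp, by simp⟩
    · -- injective
      intro l hl l' hl' hEq
      obtain ⟨-, hl2⟩ := Finset.mem_sdiff.mp hl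
      simp only [Finset.mem_insert, Finset.mem_singleton, not_or] at hl2
      have hs : insert j (insert k ({l} : Finset (Fin m))) = insert j (insert k {l'}) :=
        congrArg (fun z => z.1) hEq
      have hm : l ∈ insert j (insert k ({l'} : Finset (Fin m))) := by
        rw [← hs]; simp
      simp only [Finset.mem_insert, Finset.mem_singleton] at hm
      rcases hm with h | h | h
      · exact absurd h hl2.1
      · exact absurd h hl2.2
      · exact h
    · -- surjective
      intro s hs
      obtain ⟨-, hjs, hks⟩ := Finset.mem_filter.mp hs
      have hcard3 : s.1.card = 3 := (Finset.mem_powersetCard.mp s.2).2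
      have hsub : ({j, k} : Finset (Fin m)) ⊆ s.1 := by
        intro u hu
        simp only [Finset.mem_insert, Finset.mem_singleton] at hu
        rcases hu with rfl | rfl
        exacts [hjs, hks]
      have hcard1 : (s.1 \ ({j, k} : Finset (Fin m))).card = 1 := by
        rw [Finset.card_sdiff_of_subset hsub, hcard3, Finset.card_pair hjk]
      obtain ⟨l, hl⟩ := Finset.card_eq_one.mp hcard1
      have hlmem : l ∈ s.1 \ ({j, k} : Finset (Fin m)) := by
        rw [hl]; exact Finset.mem_singleton_self l
      obtain ⟨hls, hlnot⟩ := Finset.mem_sdiff.mp hlmem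
      simp only [Finset.mem_insert, Finset.mem_singleton, not_or] at hlnot
      refine ⟨l, Finset.mem_sdiff.mpr ⟨Finset.mem_univ l, by simp [hlnot.1, hlnot.2]⟩, ?_⟩
      apply Subtype.ext
      apply Finset.ext
      intro u
      simp only [Finset.mem_insert, Finset.mem_singleton]
      constructor
      · rintro (rfl | rfl | rfl)
        exacts [hjs, hks, hls]
      · intro hu
        by_cases h1 : u = j
        · exact Or.inl h1
        · by_cases h2 : u = k
          · exact Or.inr (Or.inl h2)
          · have : u ∈ s.1 \ ({j, k} : Finset (Fin m)) :=
              Finset.mem_sdiff.mpr ⟨hu, by simp [h1, h2]⟩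
            rw [hl] at this
            exact Or.inr (Or.inr (Finset.mem_singleton.mp this))
    · -- value computation
      intro l hl
      obtain ⟨-, hl2⟩ := Finset.mem_sdiff.mp hl
      simp only [Finset.mem_insert, Finset.mem_singleton, not_or] at hl2
      obtain ⟨hlj, hlk⟩ := hl2
      dsimp only
      have hsum : (∑ u ∈ insert j (insert k ({l} : Finset (Fin m))), (u : ℕ))
          = (j:ℕ) + (k:ℕ) + (l:ℕ) := by
        rw [Finset.sum_insert (by simp [hjk, Ne.symm hlj]),
          Finset.sum_insert (by simp [Ne.symm hlk]), Finset.sum_singleton]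
        ring
      have cjl : ¬ (j = l) := fun hh => hlj hh.symm
      have ckl : ¬ (k = l) := fun hh => hlk hh.symm
      have ckj : ¬ (k = j) := fun hh => hjk hh.symm
      rcases lt_trichotomy j k with hjk1 | hjk1 | hjk1
      · -- j < k
        rcases lt_trichotomy l j with h1 | h1 | h1
        · -- l < j < k : (p,q,r) = (l,j,k)
          rw [termB ha hb hjk hx h1 hjk1 _ (by ext u; simp; try tauto) _, hsum]
          rw [if_neg cjl, if_pos (rfl : j = j), if_neg hjk, if_neg ckl,
            if_pos (rfl : k = k)]
          simp only [epsF]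
          rw [if_pos (show (j:ℕ) < (k:ℕ) from hjk1), if_pos (show (l:ℕ) < (j:ℕ) from h1)]
          ring
        · exact absurd h1.symm cjl
        · rcases lt_trichotomy l k with h2 | h2 | h2
          · -- j < l < k : (p,q,r) = (j,l,k)
            rw [termB ha hb hjk hx h1 h2 _ (by ext u; simp; try tauto) _, hsum]
            rw [if_pos (rfl : j = j), if_neg cjl, if_neg hjk, if_neg ckl,
              if_pos (rfl : k = k)]
            simp only [epsF]
            rw [if_pos (show (j:ℕ) < (k:ℕ) from hjk1), if_neg (by omega : ¬ (l:ℕ) < (j:ℕ)),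
              if_pos (show (l:ℕ) < (k:ℕ) from h2)]
            ring
          · exact absurd h2.symm ckl
          · -- j < k < l : (p,q,r) = (j,k,l)
            rw [termB ha hb hjk hx hjk1 h2 _ (by ext u; simp; try tauto) _, hsum]
            rw [if_pos (rfl : j = j), if_neg hjk, if_neg cjl, if_neg ckl,
              if_pos (rfl : k = k)]
            simp only [epsF]
            rw [if_pos (show (j:ℕ) < (k:ℕ) from hjk1), if_neg (by omega : ¬ (l:ℕ) < (j:ℕ)),
              if_neg (by omega : ¬ (l:ℕ) < (k:ℕ))]
            ring
      · exact absurd hjk1 hjk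
      · -- k < j
        rcases lt_trichotomy l k with h1 | h1 | h1
        · -- l < k < j : (p,q,r) = (l,k,j)
          rw [termB ha hb hjk hx h1 hjk1 _ (by ext u; simp; try tauto) _, hsum]
          rw [if_neg cjl, if_neg hjk, if_pos (rfl : j = j), if_neg ckl,
            if_pos (rfl : k = k)]
          simp only [epsF]
          rw [if_neg (by omega : ¬ (j:ℕ) < (k:ℕ)), if_pos (show (l:ℕ) < (k:ℕ) from h1)]
          ring
        · exact absurd h1.symm ckl
        · rcases lt_trichotomy l j with h2 | h2 | h2
          · -- k < l < j : (p,q,r) = (k,l,j)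
            rw [termB ha hb hjk hx h1 h2 _ (by ext u; simp; try tauto) _, hsum]
            rw [if_neg hjk, if_neg cjl, if_pos (rfl : j = j), if_pos (rfl : k = k),
              if_neg ckl]
            simp only [epsF]
            rw [if_neg (by omega : ¬ (j:ℕ) < (k:ℕ)), if_neg (by omega : ¬ (l:ℕ) < (k:ℕ)),
              if_pos (show (l:ℕ) < (j:ℕ) from h2)]
            ring
          · exact absurd h2.symm cjl
          · -- k < j < l : (p,q,r) = (k,j,l)
            rw [termB ha hb hjk hx hjk1 h2 _ (by ext u; simp; try tauto) _, hsum]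
            rw [if_neg hjk, if_pos (rfl : j = j), if_neg cjl, if_pos (rfl : k = k),
              if_neg ckl]
            simp only [epsF]
            rw [if_neg (by omega : ¬ (j:ℕ) < (k:ℕ)), if_neg (by omega : ¬ (l:ℕ) < (k:ℕ)),
              if_neg (by omega : ¬ (l:ℕ) < (j:ℕ))]
            ring
  rw [← key]
  rw [Finset.sum_sdiff_eq_sub (Finset.subset_univ _), Finset.sum_pair hjk]
  rw [Fin.sum_univ_eq_sum_range (fun ln => epsF (j:ℕ) (k:ℕ) ln) m]
  rw [sub_add_eq_sub_sub]
  rw [sum_eps m (j:ℕ) (k:ℕ) (epsF (j:ℕ) (k:ℕ)) hodd j.isLt k.isLt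
    (fun hh => hjk (Fin.ext hh)) (fun l => rfl)]
  rcases neg_one_pow_pm ((j:ℕ) + (k:ℕ)) with h | h <;> rw [h] <;>
    by_cases hlt : (j:ℕ) < (k:ℕ) <;> simp [hlt] <;> norm_num

end MainB
section Final
variable {v m : ℕ} {a b : Fin m → Fin v}
  (ha : ∀ i : Fin m, (a i : ℕ) = (i : ℕ)) (hb : ∀ i : Fin m, (b i : ℕ) = (i : ℕ) + m)

include ha hb in
lemma hd_mk (g g' : Fin 3 → Fin m) (hg : Function.Injective g) (hg' : Function.Injective g') :
    ∀ (s : Fin 3 → Bool) (t t' : Fin 3), t ≠ t' →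
      (if s t then b (g' t) else a (g t)) ≠ (if s t' then b (g' t') else a (g t')) := by
  intro s t t' htt
  by_cases h1 : s t <;> by_cases h2 : s t' <;>
    simp only [h1, h2, if_true, if_false, ite_true, ite_false]
  · exact fun hh => htt (hg' ((b_eq_b hb).mp hh))
  · exact fun hh => a_ne_b ha hb (g t') (g' t) hh.symm
  · exact a_ne_b ha hb (g t) (g' t')
  · exact fun hh => htt (hg ((a_eq_a ha).mp hh))

include ha hb in
lemma term_zero_card (B : Finset (Fin v)) (hB : B.card ≠ 3)
    (s : Finset (Fin m)) (h3 : s.card = 3) :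
    (-1 : ℤ) ^ (∑ u ∈ s, (u : ℕ)) *
      (minimalTrade v (fun t => a ((s.orderIsoOfFin h3) t)) (fun t => b ((s.orderIsoOfFin h3) t)) B +
        minimalTrade v (fun t => a ((s.orderIsoOfFin h3) t)) (fun t => b ((s.orderIsoOfFin h3) (t + 1))) B -
        minimalTrade v (fun t => a ((s.orderIsoOfFin h3) t)) (fun t => b ((s.orderIsoOfFin h3) (t + 2))) B)
      = 0 := by
  have hinj : Function.Injective (fun t : Fin 3 => ((s.orderIsoOfFin h3) t : Fin m)) :=
    fun t t' hh => EquivLike.injective (s.orderIsoOfFin h3) (Subtype.ext hh)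
  have hinj1 : Function.Injective (fun t : Fin 3 => ((s.orderIsoOfFin h3) (t + 1) : Fin m)) :=
    fun t t' hh => add_right_cancel (hinj hh)
  have hinj2 : Function.Injective (fun t : Fin 3 => ((s.orderIsoOfFin h3) (t + 2) : Fin m)) :=
    fun t t' hh => add_right_cancel (hinj hh)
  rw [minimalTrade_eq_zero_of_card _ _ (hd_mk ha hb _ _ hinj hinj) B hB,
    minimalTrade_eq_zero_of_card _ _ (hd_mk ha hb _ _ hinj hinj1) B hB,
    minimalTrade_eq_zero_of_card _ _ (hd_mk ha hb _ _ hinj hinj2) B hB]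
  ring

include ha hb in
lemma hFun_zero (B : Finset (Fin v)) (hB : B.card ≠ 3) : hFun v m a b B = 0 := by
  unfold hFun
  apply Finset.sum_eq_zero
  intro s _
  exact term_zero_card ha hb B hB s.1 _

include ha hb in
lemma hFun_trade (P : Finset (Fin v)) (hP : P.card = 2) :
    ∑ B ∈ Finset.univ.filter (fun B : Finset (Fin v) => B.card = 3 ∧ P ⊆ B),
      hFun v m a b B = 0 := by
  unfold hFun
  rw [Finset.sum_comm]
  apply Finset.sum_eq_zero
  intro s _
  rw [← Finset.mul_sum, Finset.sum_sub_distrib, Finset.sum_add_distrib]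
  have hinj : Function.Injective
      (fun t : Fin 3 => ((s.1.orderIsoOfFin (Finset.mem_powersetCard.mp s.2).2) t : Fin m)) :=
    fun t t' hh => EquivLike.injective _ (Subtype.ext hh)
  have daa : ∀ g : Fin 3 → Fin m, Function.Injective g → ∀ t t' : Fin 3, t ≠ t' →
      a (g t) ≠ a (g t') := fun g hg t t' htt hh => htt (hg ((a_eq_a ha).mp hh))
  have dbb : ∀ g : Fin 3 → Fin m, Function.Injective g → ∀ t t' : Fin 3, t ≠ t' →
      b (g t) ≠ b (g t') := fun g hg t t' htt hh => htt (hg ((b_eq_b hb).mp hh))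
  have dab : ∀ (g g' : Fin 3 → Fin m), ∀ t t' : Fin 3, t ≠ t' →
      a (g t) ≠ b (g' t') := fun g g' t t' _ => a_ne_b ha hb (g t) (g' t')
  have hinj1 : Function.Injective
      (fun t : Fin 3 => ((s.1.orderIsoOfFin (Finset.mem_powersetCard.mp s.2).2) (t + 1) : Fin m)) :=
    fun t t' hh => add_right_cancel (hinj hh)
  have hinj2 : Function.Injective
      (fun t : Fin 3 => ((s.1.orderIsoOfFin (Finset.mem_powersetCard.mp s.2).2) (t + 2) : Fin m)) :=
    fun t t' hh => add_right_cancel (hinj hh)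
  rw [minimalTrade_pairsum _ _ (daa _ hinj) (dbb _ hinj) (dab _ _) P hP,
    minimalTrade_pairsum _ _ (daa _ hinj) (dbb _ hinj1) (dab _ _) P hP,
    minimalTrade_pairsum _ _ (daa _ hinj) (dbb _ hinj2) (dab _ _) P hP]
  ring

end Final

/-- V10 method: For `n ≥ 1`, `v = 4n+2`, `m = 2n+1`, `aᵢ = i`, `bᵢ = i + m`,
the sum over all 3-subsets `{α₀,α₁,α₂}` of `{0,…,2n}` (with `α₀ < α₁ < α₂`) of
`(-1)^(α₀+α₁+α₂) · 𝒯_{α₀α₁α₂}`, where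
`𝒯_{α₀α₁α₂} = (a_{α₀}a_{α₁}a_{α₂} ; b_{α₀}b_{α₁}b_{α₂}) + (a_{α₀}a_{α₁}a_{α₂} ; b_{α₁}b_{α₂}b_{α₀})
- (a_{α₀}a_{α₁}a_{α₂} ; b_{α₂}b_{α₀}b_{α₁})`, is a `(2,3,4n+2)`-halving. -/
theorem V10_method_halving
    (n : ℕ) (hn : 1 ≤ n) (v m : ℕ) (hv : v = 4 * n + 2) (hm : m = 2 * n + 1)
    (a b : Fin m → Fin v)
    (ha : ∀ i : Fin m, (a i : ℕ) = (i : ℕ)) (hb : ∀ i : Fin m, (b i : ℕ) = (i : ℕ) + m)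
    (h : Finset (Fin v) → ℤ)
    (hh : h = fun B => ∑ s ∈ ((Finset.univ : Finset (Fin m)).powersetCard 3).attach,
      (-1 : ℤ) ^ (∑ x ∈ s.1, (x : ℕ)) *
        (minimalTrade v
            (fun k => a ((s.1.orderIsoOfFin (Finset.mem_powersetCard.mp s.2).2) k))
            (fun k => b ((s.1.orderIsoOfFin (Finset.mem_powersetCard.mp s.2).2) k)) B +
          minimalTrade v
            (fun k => a ((s.1.orderIsoOfFin (Finset.mem_powersetCard.mp s.2).2) k))
            (fun k => b ((s.1.orderIsoOfFin (Finset.mem_powersetCard.mp s.2).2) (k + 1))) B -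
          minimalTrade v
            (fun k => a ((s.1.orderIsoOfFin (Finset.mem_powersetCard.mp s.2).2) k))
            (fun k => b ((s.1.orderIsoOfFin (Finset.mem_powersetCard.mp s.2).2) (k + 2))) B)) :
    isHalving v h := by
  subst hh
  have hv2 : v = 2 * m := by omega
  have hodd : Odd m := ⟨n, by omega⟩
  show isHalving v (hFun v m a b)
  have hpm : ∀ B : Finset (Fin v), B.card = 3 →
      hFun v m a b B = 1 ∨ hFun v m a b B = -1 := by
    intro B hB
    rcases classify hv2 ha hb B hB with
      ⟨i, j, k, x, y, z, hij, hjk, hx, hy, hz, rfl⟩ | ⟨j, k, x, hjk, hx, rfl⟩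
    · exact mainA ha hb hij hjk hx hy hz
    · exact mainB ha hb hodd hjk hx
  refine ⟨⟨fun B hB => hFun_zero ha hb B hB, fun P hP => hFun_trade ha hb P hP⟩, ?_, hpm⟩
  intro B
  by_cases h3 : B.card = 3
  · rcases hpm B h3 with h | h
    · exact Or.inr (Or.inr h)
    · exact Or.inl h
  · exact Or.inr (Or.inl (hFun_zero ha hb B h3))
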